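/- For any bivariate CDF F on ℝ² with absolutely continuous joint distribution and marginal CDFs F₁, F₂, the following integral identity holds: ∫ F² dF − 2∫ F·F₁·F₂ dF + 2∫ F² dF₁dF₂ − 1/9 = ∫(F − F₁F₂)² dF + 2∫(F − F₁F₂)² dF₁dF₂. -/

import Mathlib

open MeasureTheory Set

namespace YanagiAux

noncomputable def cdf' (m : Measure ℝ) : ℝ → ENNReal := fun x => m (Set.Iic x)

lemma cdf'_meas (m : Measure ℝ) : Measurable (cdf' m) :=
  Monotone.measurable (fun a b h => measure_mono (Iic_subset_Iic.2 h))

lemma E1_meas (a : ℝ) : MeasurableSet {p : ℝ × ℝ | a ≤ p.1 ∧ p.2 ≤ p.1} :=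
  ((measurableSet_Ici (a := a)).preimage measurable_fst).inter
    (measurableSet_le measurable_snd measurable_fst)

/-- The core lemma: 2 · P(a ≤ X, Y ≤ X) + F(a)² = 1. -/
lemma core (m : Measure ℝ) [IsProbabilityMeasure m] (h0 : ∀ x : ℝ, m {x} = 0) (a : ℝ) :
    2 * (m.prod m) {p : ℝ × ℝ | a ≤ p.1 ∧ p.2 ≤ p.1} + (cdf' m a) ^ 2 = 1 := by
  set E1 : Set (ℝ × ℝ) := {p | a ≤ p.1 ∧ p.2 ≤ p.1} with hE1def
  set E2 : Set (ℝ × ℝ) := {p | a ≤ p.2 ∧ p.1 ≤ p.2} with hE2def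
  set E3 : Set (ℝ × ℝ) := Iio a ×ˢ Iio a with hE3def
  have hE1 : MeasurableSet E1 := E1_meas a
  have hE2 : MeasurableSet E2 :=
    ((measurableSet_Ici (a := a)).preimage measurable_snd).inter
      (measurableSet_le measurable_fst measurable_snd)
  have hE3 : MeasurableSet E3 := measurableSet_Iio.prod measurableSet_Iio
  have hdiag : (m.prod m) {p : ℝ × ℝ | p.1 = p.2} = 0 := by
    rw [Measure.prod_apply (measurableSet_eq_fun measurable_fst measurable_snd)]
    have hpre : ∀ x : ℝ, (Prod.mk x ⁻¹' {p : ℝ × ℝ | p.1 = p.2}) = {x} := by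
      intro x; ext y; simp [eq_comm]
    simp [hpre, h0]
  have hswap : (m.prod m) E2 = (m.prod m) E1 := by
    have h : E2 = Prod.swap ⁻¹' E1 := by
      ext p; simp [hE1def, hE2def]
    rw [h, ← Measure.map_apply measurable_swap hE1, Measure.prod_swap]
  have hinter : (m.prod m) (E1 ∩ E2) = 0 := by
    refine measure_mono_null ?_ hdiag
    rintro p ⟨⟨_, h1⟩, ⟨_, h2⟩⟩
    exact le_antisymm h2 h1
  have h12 : (m.prod m) (E1 ∪ E2) = 2 * (m.prod m) E1 := by
    have := measure_union_add_inter (μ := m.prod m) E1 hE2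
    rw [hinter, add_zero, hswap] at this
    rw [this]; ring
  have hdisj : Disjoint (E1 ∪ E2) E3 := by
    rw [Set.disjoint_left]
    rintro p (⟨h1, _⟩ | ⟨h1, _⟩) ⟨h3, h4⟩
    · exact absurd (lt_of_le_of_lt h1 h3) (lt_irrefl a)
    · exact absurd (lt_of_le_of_lt h1 h4) (lt_irrefl a)
  have hunion : (E1 ∪ E2) ∪ E3 = univ := by
    ext p
    simp only [mem_union, mem_setOf_eq, mem_prod, mem_Iio, mem_univ, iff_true, hE1def,
      hE2def, hE3def]
    rcases le_total p.2 p.1 with h | h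
    · rcases le_or_gt a p.1 with h' | h'
      · exact Or.inl (Or.inl ⟨h', h⟩)
      · exact Or.inr ⟨h', lt_of_le_of_lt h h'⟩
    · rcases le_or_gt a p.2 with h' | h'
      · exact Or.inl (Or.inr ⟨h', h⟩)
      · exact Or.inr ⟨lt_of_le_of_lt h h', h'⟩
  have hio : m (Iio a) = m (Iic a) := by
    rw [← Iio_union_right, measure_union (by simp) (measurableSet_singleton a), h0,
      add_zero]
  have hE3v : (m.prod m) E3 = (cdf' m a) ^ 2 := by
    rw [hE3def, Measure.prod_prod, hio, cdf']; ring
  have htot : (m.prod m) ((E1 ∪ E2) ∪ E3) = 1 := by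
    rw [hunion]; simp
  rw [measure_union hdisj hE3, h12, hE3v] at htot
  exact htot


/-- `P(a ≤ X, Y ≤ X)` as a lintegral of the indicator of `Ici a` times the CDF. -/
lemma prodE1_eq (m : Measure ℝ) [SFinite m] (a : ℝ) :
    (m.prod m) {p : ℝ × ℝ | a ≤ p.1 ∧ p.2 ≤ p.1}
      = ∫⁻ x, (Ici a).indicator (cdf' m) x ∂m := by
  rw [Measure.prod_apply (E1_meas a)]
  refine lintegral_congr fun x => ?_
  by_cases h : a ≤ x
  · have : (Prod.mk x ⁻¹' {p : ℝ × ℝ | a ≤ p.1 ∧ p.2 ≤ p.1}) = Iic x := by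
      ext y; simp [h]
    rw [this]; simp [Set.indicator_apply, h, cdf']
  · have : (Prod.mk x ⁻¹' {p : ℝ × ℝ | a ≤ p.1 ∧ p.2 ≤ p.1}) = ∅ := by
      ext y; simp [h]
    rw [this]; simp [Set.indicator_apply, h]

/-- Additive form of the core lemma. -/
lemma core' (m : Measure ℝ) [IsProbabilityMeasure m] (h0 : ∀ x : ℝ, m {x} = 0) (a : ℝ) :
    2 * (∫⁻ x, (Ici a).indicator (cdf' m) x ∂m) + (cdf' m a) ^ 2 = 1 := by
  rw [← prodE1_eq]; exact core m h0 a

lemma uncurry_meas (m : Measure ℝ) :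
    Measurable (Function.uncurry fun a x => (Ici a).indicator (cdf' m) x) := by
  have : (Function.uncurry fun a x => (Ici a).indicator (cdf' m) x)
      = {q : ℝ × ℝ | q.1 ≤ q.2}.indicator (fun q => cdf' m q.2) := by
    ext q
    simp only [Function.uncurry, Set.indicator_apply, mem_Ici, mem_setOf_eq]
  rw [this]
  exact ((cdf'_meas m).comp measurable_snd).indicator
    (measurableSet_le measurable_fst measurable_snd)

/-- `∫ F² dF = 1/3` for an atomless CDF (lintegral form). -/
lemma third (m : Measure ℝ) [IsProbabilityMeasure m] (h0 : ∀ x : ℝ, m {x} = 0) :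
    ∫⁻ x, (cdf' m x) ^ 2 ∂m = 1 / 3 := by
  set T := ∫⁻ x, (cdf' m x) ^ 2 ∂m with hT
  have hmeasc : Measurable (cdf' m) := cdf'_meas m
  have hswap : ∫⁻ a, (∫⁻ x, (Ici a).indicator (cdf' m) x ∂m) ∂m = T := by
    rw [lintegral_lintegral_swap (uncurry_meas m).aemeasurable]
    refine lintegral_congr fun x => ?_
    have h1 : ∀ a : ℝ, (Ici a).indicator (cdf' m) x
        = (Iic x).indicator (fun _ => cdf' m x) a := by
      intro a
      simp only [Set.indicator_apply, mem_Ici, mem_Iic]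
    calc ∫⁻ a, (Ici a).indicator (cdf' m) x ∂m
        = ∫⁻ a, (Iic x).indicator (fun _ => cdf' m x) a ∂m := lintegral_congr h1
      _ = cdf' m x * m (Iic x) := lintegral_indicator_const measurableSet_Iic _
      _ = (cdf' m x) ^ 2 := by rw [cdf']; ring
  have hint : ∫⁻ a, (2 * (∫⁻ x, (Ici a).indicator (cdf' m) x ∂m) + (cdf' m a) ^ 2) ∂m
      = 1 := by
    rw [lintegral_congr fun a => core' m h0 a]
    simp
  have hH : Measurable fun a => ∫⁻ x, (Ici a).indicator (cdf' m) x ∂m :=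
    (uncurry_meas m).lintegral_prod_right'
  rw [lintegral_add_right _ (hmeasc.pow_const 2), lintegral_const_mul _ hH, hswap] at hint
  have h3 : (3 : ENNReal) * T = 1 := by
    rw [← hint]; ring
  calc T = 3⁻¹ * (3 * T) := by
        rw [← mul_assoc, ENNReal.inv_mul_cancel (by norm_num) (by norm_num), one_mul]
    _ = 1 / 3 := by rw [h3, one_div, mul_one]


/-- Pure semiring computation used pointwise. -/
lemma pointwise_id {x y u v : ENNReal} (h1 : 2 * x + u = 1) (h2 : 2 * y + v = 1) :
    4 * (x * y) + u + v = 1 + u * v := by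
  calc 4 * (x * y) + u + v
      = 4 * (x * y) + u * (2 * y + v) + (2 * x + u) * v := by rw [h1, h2]; ring
    _ = (2 * x + u) * (2 * y + v) + u * v := by ring
    _ = 1 + u * v := by rw [h1, h2, one_mul]

/-- Integrability of a bounded measurable function w.r.t. a finite measure. -/
lemma intgr {α : Type*} [MeasurableSpace α] (P : Measure α) [IsProbabilityMeasure P]
    {f : α → ℝ} (hm : Measurable f) (h0 : ∀ x, 0 ≤ f x) (h1 : ∀ x, f x ≤ 1) :
    Integrable f P :=
  (integrable_const 1).mono' hm.aestronglyMeasurable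
    (ae_of_all _ fun x => by rw [Real.norm_eq_abs, abs_of_nonneg (h0 x)]; exact h1 x)

/-- Expansion of the square of a difference of bounded measurable functions. -/
lemma expand_sq {α : Type*} [MeasurableSpace α] (P : Measure α) [IsProbabilityMeasure P]
    {f g : α → ℝ} (hf : Measurable f) (hg : Measurable g)
    (hf0 : ∀ x, 0 ≤ f x) (hf1 : ∀ x, f x ≤ 1) (hg0 : ∀ x, 0 ≤ g x) (hg1 : ∀ x, g x ≤ 1) :
    ∫ x, (f x - g x) ^ 2 ∂P
      = ∫ x, f x ^ 2 ∂P - 2 * ∫ x, f x * g x ∂P + ∫ x, g x ^ 2 ∂P := by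
  have hif : Integrable (fun x => f x ^ 2) P :=
    intgr P (hf.pow_const 2) (fun x => sq_nonneg _)
      (fun x => by nlinarith [hf0 x, hf1 x])
  have hig : Integrable (fun x => g x ^ 2) P :=
    intgr P (hg.pow_const 2) (fun x => sq_nonneg _)
      (fun x => by nlinarith [hg0 x, hg1 x])
  have hifg : Integrable (fun x => f x * g x) P :=
    intgr P (hf.mul hg) (fun x => mul_nonneg (hf0 x) (hg0 x))
      (fun x => by nlinarith [hf0 x, hf1 x, hg0 x, hg1 x])
  have he : (fun x => (f x - g x) ^ 2)
      = fun x => (f x ^ 2 + g x ^ 2) - 2 * (f x * g x) := by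
    funext x; ring
  have hsum : Integrable (fun x => f x ^ 2 + g x ^ 2) P := hif.add hig
  have h2fg : Integrable (fun x => 2 * (f x * g x)) P := hifg.const_mul 2
  rw [he, integral_sub hsum h2fg, integral_add hif hig, integral_const_mul]
  ring

end YanagiAux
open MeasureTheory Set YanagiAux ENNReal

theorem yanagimoto_representation_identity
    (ν : Measure (ℝ × ℝ)) [IsProbabilityMeasure ν] (hac : ν ≪ volume)
    (F : ℝ → ℝ → ℝ) (F₁ F₂ : ℝ → ℝ)
    (hF : ∀ x y, F x y = (ν (Set.Iic x ×ˢ Set.Iic y)).toReal)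
    (hF₁ : ∀ x, F₁ x = ((ν.map Prod.fst) (Set.Iic x)).toReal)
    (hF₂ : ∀ y, F₂ y = ((ν.map Prod.snd) (Set.Iic y)).toReal) :
    (∫ p : ℝ × ℝ, (F p.1 p.2) ^ 2 ∂ν)
      - 2 * ∫ p : ℝ × ℝ, F p.1 p.2 * F₁ p.1 * F₂ p.2 ∂ν
      + 2 * (∫ p : ℝ × ℝ, (F p.1 p.2) ^ 2 ∂((ν.map Prod.fst).prod (ν.map Prod.snd)))
      - 1 / 9
    = (∫ p : ℝ × ℝ, (F p.1 p.2 - F₁ p.1 * F₂ p.2) ^ 2 ∂ν)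
      + 2 * ∫ p : ℝ × ℝ, (F p.1 p.2 - F₁ p.1 * F₂ p.2) ^ 2
          ∂((ν.map Prod.fst).prod (ν.map Prod.snd)) := by
  classical
  set ν₁ : Measure ℝ := ν.map Prod.fst with hν₁
  set ν₂ : Measure ℝ := ν.map Prod.snd with hν₂
  haveI h1p : IsProbabilityMeasure ν₁ := Measure.isProbabilityMeasure_map measurable_fst.aemeasurable
  haveI h2p : IsProbabilityMeasure ν₂ := Measure.isProbabilityMeasure_map measurable_snd.aemeasurable
  set μ : Measure (ℝ × ℝ) := ν₁.prod ν₂ with hμ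
  -- marginal singletons are null
  have h01 : ∀ x : ℝ, ν₁ {x} = 0 := by
    intro x
    rw [hν₁, Measure.map_apply measurable_fst (measurableSet_singleton x)]
    refine hac ?_
    rw [← Set.prod_univ, Measure.volume_eq_prod, Measure.prod_prod, Real.volume_singleton,
      zero_mul]
  have h02 : ∀ y : ℝ, ν₂ {y} = 0 := by
    intro y
    rw [hν₂, Measure.map_apply measurable_snd (measurableSet_singleton y)]
    refine hac ?_
    rw [← Set.univ_prod, Measure.volume_eq_prod, Measure.prod_prod, Real.volume_singleton,
      mul_zero]
  -- abbreviations
  set c₁ : ℝ → ENNReal := cdf' ν₁ with hc₁def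
  set c₂ : ℝ → ENNReal := cdf' ν₂ with hc₂def
  have hc₁m : Measurable c₁ := cdf'_meas ν₁
  have hc₂m : Measurable c₂ := cdf'_meas ν₂
  set G : ℝ × ℝ → ENNReal := fun p => ν (Iic p.1 ×ˢ Iic p.2) with hGdef
  have hGm : Measurable G := by
    have hS : MeasurableSet {r : (ℝ × ℝ) × (ℝ × ℝ) | r.2.1 ≤ r.1.1 ∧ r.2.2 ≤ r.1.2} :=
      (measurableSet_le (measurable_fst.comp measurable_snd)
          (measurable_fst.comp measurable_fst)).inter
        (measurableSet_le (measurable_snd.comp measurable_snd)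
          (measurable_snd.comp measurable_fst))
    rw [hGdef]
    have heq : (fun p : ℝ × ℝ => ν (Iic p.1 ×ˢ Iic p.2))
        = fun p => ν (Prod.mk p ⁻¹' {r : (ℝ × ℝ) × (ℝ × ℝ) | r.2.1 ≤ r.1.1 ∧ r.2.2 ≤ r.1.2}) := by
      funext p
      congr 1
    rw [heq]
    exact measurable_measure_prodMk_left hS
  -- relations with F, F₁, F₂
  have hFG : ∀ p : ℝ × ℝ, F p.1 p.2 = (G p).toReal := fun p => hF p.1 p.2
  have hF₁c : ∀ x, F₁ x = (c₁ x).toReal := fun x => hF₁ x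
  have hF₂c : ∀ y, F₂ y = (c₂ y).toReal := fun y => hF₂ y
  -- bounds
  have hGle : ∀ p, G p ≤ 1 := fun p => prob_le_one
  have hc₁le : ∀ x, c₁ x ≤ 1 := fun x => prob_le_one
  have hc₂le : ∀ y, c₂ y ≤ 1 := fun y => prob_le_one
  have toReal01 : ∀ a : ENNReal, a ≤ 1 → 0 ≤ a.toReal ∧ a.toReal ≤ 1 := by
    intro a ha
    refine ⟨ENNReal.toReal_nonneg, ?_⟩
    have := ENNReal.toReal_mono (by norm_num) ha
    simpa using this
  -- measurable real functions
  have hfm : Measurable fun p : ℝ × ℝ => F p.1 p.2 := by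
    have : (fun p : ℝ × ℝ => F p.1 p.2) = fun p => (G p).toReal := funext hFG
    rw [this]; exact hGm.ennreal_toReal
  have hgm : Measurable fun p : ℝ × ℝ => F₁ p.1 * F₂ p.2 := by
    have : (fun p : ℝ × ℝ => F₁ p.1 * F₂ p.2)
        = fun p => (c₁ p.1).toReal * (c₂ p.2).toReal := by
      funext p; rw [hF₁c, hF₂c]
    rw [this]
    exact ((hc₁m.comp measurable_fst).ennreal_toReal).mul
      ((hc₂m.comp measurable_snd).ennreal_toReal)
  have hf0 : ∀ p : ℝ × ℝ, 0 ≤ F p.1 p.2 := fun p => by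
    rw [hFG]; exact (toReal01 _ (hGle p)).1
  have hf1 : ∀ p : ℝ × ℝ, F p.1 p.2 ≤ 1 := fun p => by
    rw [hFG]; exact (toReal01 _ (hGle p)).2
  have hg0 : ∀ p : ℝ × ℝ, 0 ≤ F₁ p.1 * F₂ p.2 := fun p => by
    rw [hF₁c, hF₂c]
    exact mul_nonneg (toReal01 _ (hc₁le p.1)).1 (toReal01 _ (hc₂le p.2)).1
  have hg1 : ∀ p : ℝ × ℝ, F₁ p.1 * F₂ p.2 ≤ 1 := fun p => by
    rw [hF₁c, hF₂c]
    exact mul_le_one₀ (toReal01 _ (hc₁le p.1)).2 (toReal01 _ (hc₂le p.2)).1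
      (toReal01 _ (hc₂le p.2)).2
  -- lintegral facts
  have hthird1 : ∫⁻ x, (c₁ x) ^ 2 ∂ν₁ = 1 / 3 := third ν₁ h01
  have hthird2 : ∫⁻ y, (c₂ y) ^ 2 ∂ν₂ = 1 / 3 := third ν₂ h02
  have hmarg1 : ∫⁻ q : ℝ × ℝ, (c₁ q.1) ^ 2 ∂ν = 1 / 3 := by
    calc ∫⁻ q : ℝ × ℝ, (c₁ q.1) ^ 2 ∂ν
        = ∫⁻ x, (c₁ x) ^ 2 ∂ν₁ := by
          rw [hν₁, lintegral_map (hc₁m.pow_const 2) measurable_fst]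
      _ = 1 / 3 := hthird1
  have hmarg2 : ∫⁻ q : ℝ × ℝ, (c₂ q.2) ^ 2 ∂ν = 1 / 3 := by
    calc ∫⁻ q : ℝ × ℝ, (c₂ q.2) ^ 2 ∂ν
        = ∫⁻ y, (c₂ y) ^ 2 ∂ν₂ := by
          rw [hν₂, lintegral_map (hc₂m.pow_const 2) measurable_snd]
      _ = 1 / 3 := hthird2
  -- the H functions
  set H₁ : ℝ → ENNReal := fun a => ∫⁻ x, (Ici a).indicator c₁ x ∂ν₁ with hH₁def
  set H₂ : ℝ → ENNReal := fun a => ∫⁻ y, (Ici a).indicator c₂ y ∂ν₂ with hH₂def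
  have hH₁m : Measurable H₁ := (uncurry_meas ν₁).lintegral_prod_right'
  have hH₂m : Measurable H₂ := (uncurry_meas ν₂).lintegral_prod_right'
  have hH₁le : ∀ a, H₁ a ≤ 1 := fun a => by
    rw [hH₁def]
    simp only
    rw [← prodE1_eq ν₁ a]
    exact prob_le_one
  have hH₂le : ∀ a, H₂ a ≤ 1 := fun a => by
    rw [hH₂def]
    simp only
    rw [← prodE1_eq ν₂ a]
    exact prob_le_one
  have hcore1 : ∀ a, 2 * H₁ a + (c₁ a) ^ 2 = 1 := fun a => core' ν₁ h01 a
  have hcore2 : ∀ a, 2 * H₂ a + (c₂ a) ^ 2 = 1 := fun a => core' ν₂ h02 a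
  have hptwise : ∀ q : ℝ × ℝ,
      4 * (H₁ q.1 * H₂ q.2) + (c₁ q.1) ^ 2 + (c₂ q.2) ^ 2
        = 1 + (c₁ q.1 * c₂ q.2) ^ 2 := by
    intro q
    have h := pointwise_id (hcore1 q.1) (hcore2 q.2)
    rwa [← mul_pow] at h
  set D := ∫⁻ q : ℝ × ℝ, H₁ q.1 * H₂ q.2 ∂ν with hDdef
  set A' := ∫⁻ q : ℝ × ℝ, (c₁ q.1 * c₂ q.2) ^ 2 ∂ν with hA'def
  have hA'le : A' ≤ 1 := by
    rw [hA'def]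
    calc ∫⁻ q : ℝ × ℝ, (c₁ q.1 * c₂ q.2) ^ 2 ∂ν ≤ ∫⁻ _, 1 ∂ν :=
        lintegral_mono fun q => pow_le_one' (mul_le_one' (hc₁le q.1) (hc₂le q.2)) 2
      _ = 1 := by simp
  have hA'ne : A' ≠ ⊤ := ne_top_of_le_ne_top ENNReal.one_ne_top hA'le
  have hDle : D ≤ 1 := by
    rw [hDdef]
    calc ∫⁻ q : ℝ × ℝ, H₁ q.1 * H₂ q.2 ∂ν ≤ ∫⁻ _, 1 ∂ν :=
        lintegral_mono fun q => mul_le_one' (hH₁le q.1) (hH₂le q.2)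
      _ = 1 := by simp
  have hDne : D ≠ ⊤ := ne_top_of_le_ne_top ENNReal.one_ne_top hDle
  -- the key ENNReal identity : 4 D = A' + 1/3
  have hkey : 4 * D = A' + 1 / 3 := by
    have hint : ∫⁻ q : ℝ × ℝ,
        (4 * (H₁ q.1 * H₂ q.2) + (c₁ q.1) ^ 2 + (c₂ q.2) ^ 2) ∂ν
        = ∫⁻ q : ℝ × ℝ, (1 + (c₁ q.1 * c₂ q.2) ^ 2) ∂ν := lintegral_congr hptwise
    have hm1 : Measurable fun q : ℝ × ℝ => H₁ q.1 * H₂ q.2 :=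
      (hH₁m.comp measurable_fst).mul (hH₂m.comp measurable_snd)
    have hg1 : Measurable fun q : ℝ × ℝ => (c₁ q.1) ^ 2 :=
      (hc₁m.comp measurable_fst).pow_const 2
    have hg2 : Measurable fun q : ℝ × ℝ => (c₂ q.2) ^ 2 :=
      (hc₂m.comp measurable_snd).pow_const 2
    rw [lintegral_add_right _ hg2, lintegral_add_right _ hg1,
      lintegral_const_mul _ hm1, lintegral_add_left measurable_const,
      lintegral_one, measure_univ, hmarg1, hmarg2, ← hDdef, ← hA'def] at hint
    have h23 : (1 : ENNReal) / 3 + 1 / 3 = 2 / 3 := by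
      rw [ENNReal.div_add_div_same]; norm_num
    have h13 : (1 : ENNReal) / 3 + 2 / 3 = 1 := by
      rw [ENNReal.div_add_div_same, show (1 : ENNReal) + 2 = 3 by norm_num]
      exact ENNReal.div_self (by norm_num) (by norm_num)
    have hfin : 4 * D + 2 / 3 = (A' + 1 / 3) + 2 / 3 := by
      calc 4 * D + 2 / 3 = 4 * D + (1 / 3 + 1 / 3) := by rw [h23]
        _ = 4 * D + 1 / 3 + 1 / 3 := by rw [add_assoc]
        _ = 1 + A' := hint
        _ = (A' + 1 / 3) + 2 / 3 := by rw [add_assoc, h13, add_comm]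
    have h23ne : (2 : ENNReal) / 3 ≠ ⊤ := by
      simp [ENNReal.div_eq_top]
    exact (ENNReal.add_left_inj h23ne).mp hfin
  -- Fubini : ∫ G·c₁c₂ dμ = D
  have hSmeas : MeasurableSet {r : (ℝ × ℝ) × (ℝ × ℝ) | r.2.1 ≤ r.1.1 ∧ r.2.2 ≤ r.1.2} :=
    (measurableSet_le (measurable_fst.comp measurable_snd)
        (measurable_fst.comp measurable_fst)).inter
      (measurableSet_le (measurable_snd.comp measurable_snd)
        (measurable_snd.comp measurable_fst))
  set W : (ℝ × ℝ) × (ℝ × ℝ) → ENNReal :=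
    fun r => ({r : (ℝ × ℝ) × (ℝ × ℝ) | r.2.1 ≤ r.1.1 ∧ r.2.2 ≤ r.1.2}).indicator
      (fun r => c₁ r.1.1 * c₂ r.1.2) r with hWdef
  have hWm : Measurable W :=
    (((hc₁m.comp (measurable_fst.comp measurable_fst)).mul
      (hc₂m.comp (measurable_snd.comp measurable_fst)))).indicator hSmeas
  have hstepa : ∀ p : ℝ × ℝ, G p * (c₁ p.1 * c₂ p.2) = ∫⁻ q, W (p, q) ∂ν := by
    intro p
    have h1 : ∀ q : ℝ × ℝ,
        W (p, q) = (Iic p.1 ×ˢ Iic p.2).indicator (fun _ => c₁ p.1 * c₂ p.2) q := by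
      intro q
      simp only [hWdef, Set.indicator_apply, mem_setOf_eq, Set.mem_prod, mem_Iic]
    rw [lintegral_congr h1,
      lintegral_indicator_const (measurableSet_Iic.prod measurableSet_Iic), mul_comm]
  have hstepb : ∫⁻ p, G p * (c₁ p.1 * c₂ p.2) ∂μ = D := by
    calc ∫⁻ p, G p * (c₁ p.1 * c₂ p.2) ∂μ
        = ∫⁻ p, ∫⁻ q, W (p, q) ∂ν ∂μ := lintegral_congr hstepa
      _ = ∫⁻ q, ∫⁻ p, W (p, q) ∂μ ∂ν := lintegral_lintegral_swap hWm.aemeasurable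
      _ = ∫⁻ q, H₁ q.1 * H₂ q.2 ∂ν := by
          refine lintegral_congr fun q => ?_
          have h2 : ∀ p : ℝ × ℝ,
              W (p, q) = ((Ici q.1).indicator c₁ p.1) * ((Ici q.2).indicator c₂ p.2) := by
            intro p
            by_cases hx : q.1 ≤ p.1 <;> by_cases hy : q.2 ≤ p.2 <;>
              simp [hWdef, Set.indicator_apply, hx, hy]
          rw [lintegral_congr h2, hμ,
            lintegral_prod_mul (hc₁m.indicator measurableSet_Ici).aemeasurable
              (hc₂m.indicator measurableSet_Ici).aemeasurable]
      _ = D := hDdef.symm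
  -- ∫ (c₁c₂)² dμ = 1/9
  have hC' : ∫⁻ p : ℝ × ℝ, (c₁ p.1 * c₂ p.2) ^ 2 ∂μ = 1 / 9 := by
    rw [hμ]
    calc ∫⁻ p : ℝ × ℝ, (c₁ p.1 * c₂ p.2) ^ 2 ∂(ν₁.prod ν₂)
        = ∫⁻ p : ℝ × ℝ, (c₁ p.1) ^ 2 * (c₂ p.2) ^ 2 ∂(ν₁.prod ν₂) := by
          simp_rw [mul_pow]
      _ = (∫⁻ x, (c₁ x) ^ 2 ∂ν₁) * ∫⁻ y, (c₂ y) ^ 2 ∂ν₂ :=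
          lintegral_prod_mul (hc₁m.pow_const 2).aemeasurable
            (hc₂m.pow_const 2).aemeasurable
      _ = 1 / 9 := by
          rw [hthird1, hthird2, one_div, one_div,
            ← ENNReal.mul_inv (Or.inl (by norm_num)) (Or.inl (by norm_num))]
          norm_num
  -- conversions to real integrals
  have hmc : Measurable fun q : ℝ × ℝ => (c₁ q.1 * c₂ q.2) ^ 2 :=
    ((hc₁m.comp measurable_fst).mul (hc₂m.comp measurable_snd)).pow_const 2
  have hmG : Measurable fun q : ℝ × ℝ => G q * (c₁ q.1 * c₂ q.2) :=
    hGm.mul ((hc₁m.comp measurable_fst).mul (hc₂m.comp measurable_snd))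
  have hAeq : ∫ p : ℝ × ℝ, (F₁ p.1 * F₂ p.2) ^ 2 ∂ν = A'.toReal := by
    have hpt : ∀ p : ℝ × ℝ, (F₁ p.1 * F₂ p.2) ^ 2 = ((c₁ p.1 * c₂ p.2) ^ 2).toReal := by
      intro p; rw [hF₁c, hF₂c, ← ENNReal.toReal_mul, ← ENNReal.toReal_pow]
    rw [integral_congr_ae (ae_of_all _ hpt),
      integral_toReal hmc.aemeasurable
        (ae_of_all _ fun q => lt_of_le_of_lt
          (pow_le_one' (mul_le_one' (hc₁le q.1) (hc₂le q.2)) 2) ENNReal.one_lt_top),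
      hA'def]
  have hBeq : ∫ p : ℝ × ℝ, F p.1 p.2 * F₁ p.1 * F₂ p.2 ∂μ = D.toReal := by
    have hpt : ∀ p : ℝ × ℝ,
        F p.1 p.2 * F₁ p.1 * F₂ p.2 = (G p * (c₁ p.1 * c₂ p.2)).toReal := by
      intro p
      rw [hFG, hF₁c, hF₂c, ENNReal.toReal_mul, ENNReal.toReal_mul, mul_assoc]
    rw [integral_congr_ae (ae_of_all _ hpt),
      integral_toReal hmG.aemeasurable
        (ae_of_all _ fun q => lt_of_le_of_lt
          (mul_le_one' (hGle q) (mul_le_one' (hc₁le q.1) (hc₂le q.2)))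
          ENNReal.one_lt_top),
      hstepb]
  have hCeq : ∫ p : ℝ × ℝ, (F₁ p.1 * F₂ p.2) ^ 2 ∂μ = 1 / 9 := by
    have hpt : ∀ p : ℝ × ℝ, (F₁ p.1 * F₂ p.2) ^ 2 = ((c₁ p.1 * c₂ p.2) ^ 2).toReal := by
      intro p; rw [hF₁c, hF₂c, ← ENNReal.toReal_mul, ← ENNReal.toReal_pow]
    rw [integral_congr_ae (ae_of_all _ hpt),
      integral_toReal hmc.aemeasurable
        (ae_of_all _ fun q => lt_of_le_of_lt
          (pow_le_one' (mul_le_one' (hc₁le q.1) (hc₂le q.2)) 2) ENNReal.one_lt_top),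
      hC']
    simp
  -- the key real identity
  have hkeyR : 4 * D.toReal = A'.toReal + 1 / 3 := by
    have h := congrArg ENNReal.toReal hkey
    rw [ENNReal.toReal_mul, ENNReal.toReal_add hA'ne (by simp [ENNReal.div_eq_top]),
      ENNReal.toReal_div] at h
    norm_num at h
    convert h using 2 <;> norm_num
  -- expansions of the squares
  have e1 := expand_sq ν (f := fun p : ℝ × ℝ => F p.1 p.2)
    (g := fun p : ℝ × ℝ => F₁ p.1 * F₂ p.2) hfm hgm hf0 hf1 hg0 hg1
  have e2 := expand_sq μ (f := fun p : ℝ × ℝ => F p.1 p.2)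
    (g := fun p : ℝ × ℝ => F₁ p.1 * F₂ p.2) hfm hgm hf0 hf1 hg0 hg1
  have hassocν : ∫ p : ℝ × ℝ, F p.1 p.2 * (F₁ p.1 * F₂ p.2) ∂ν
      = ∫ p : ℝ × ℝ, F p.1 p.2 * F₁ p.1 * F₂ p.2 ∂ν := by
    simp_rw [mul_assoc]
  have hassocμ : ∫ p : ℝ × ℝ, F p.1 p.2 * (F₁ p.1 * F₂ p.2) ∂μ
      = ∫ p : ℝ × ℝ, F p.1 p.2 * F₁ p.1 * F₂ p.2 ∂μ := by
    simp_rw [mul_assoc]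
  rw [e1, e2, hassocν, hassocμ, hAeq, hBeq, hCeq]
  linarith [hkeyR]
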